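/- For any chordal graph G = (V,E) with V finite and any positive integer r, Σ_{I∈𝒞(G), |I|≤2r} (−1)^{|I|−1} ≤ c(G), where the sum runs over all elements I of the clique complex 𝒞(G) of cardinality at most 2r and c(G) is the number of connected components of G. -/

import Mathlib

open MeasureTheory Finset
open scoped Classical

/-- A graph is chordal if it contains no induced cycle of length four or greater. -/
def SimpleGraph.IsChordal {V : Type*} (G : SimpleGraph V) : Prop :=
  ∀ n : ℕ, 4 ≤ n → ∀ s : Set V, ¬ Nonempty (G.induce s ≃g SimpleGraph.cycleGraph n)

/-- The clique complex of `G`: the collection of all non-empty cliques of `G`. -/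
noncomputable def SimpleGraph.cliqueComplex {V : Type*} [Fintype V] (G : SimpleGraph V) :
    Finset (Finset V) :=
  Finset.univ.powerset.filter fun I => I.Nonempty ∧ G.IsClique (I : Set V)

/-- The independence number of `G`: the maximum size of a set of pairwise
non-adjacent vertices. -/
noncomputable def SimpleGraph.indepNum' {V : Type*} [Fintype V] (G : SimpleGraph V) : ℕ :=
  sSup {n | ∃ s : Finset V, ((s : Set V).Pairwise fun v w => ¬ G.Adj v w) ∧ s.card = n}

namespace SimpleGraph


variable {V : Type*} {W : Type*}

/-- A "bad" structure: an injective map from the cycle graph that is adjacency-faithful. -/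
def HasChordlessCycle (G : SimpleGraph V) : Prop :=
  ∃ (n : ℕ) (f : Fin n → V), 4 ≤ n ∧ Function.Injective f ∧
    ∀ i j, G.Adj (f i) (f j) ↔ (cycleGraph n).Adj i j

theorem isChordal_iff_not_hasChordlessCycle (G : SimpleGraph V) :
    G.IsChordal ↔ ¬ G.HasChordlessCycle := by
  constructor
  · rintro h ⟨n, f, hn, hinj, hadj⟩
    refine h n hn (Set.range f) ⟨?_⟩
    refine ⟨(Equiv.ofInjective f hinj).symm, ?_⟩
    intro u v
    simp only [comap_adj, Function.Embedding.coe_subtype]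
    have hu : ((Equiv.ofInjective f hinj) ((Equiv.ofInjective f hinj).symm u) : V) = u := by
      rw [Equiv.apply_symm_apply]
    have hv : ((Equiv.ofInjective f hinj) ((Equiv.ofInjective f hinj).symm v) : V) = v := by
      rw [Equiv.apply_symm_apply]
    rw [← hadj]
    have : ∀ i : Fin n, ((Equiv.ofInjective f hinj) i : V) = f i := fun i => rfl
    rw [← this, ← this, hu, hv]
  · rintro h n hn s ⟨e⟩
    refine h ⟨n, fun i => ((e.symm i : s) : V), hn, ?_, ?_⟩
    · intro i j hij
      apply e.symm.injective
      exact Subtype.ext hij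
    · intro i j
      have := e.symm.map_rel_iff (a := i) (b := j)
      rw [← this]
      simp only [comap_adj, Function.Embedding.coe_subtype]

theorem HasChordlessCycle.of_induce {G : SimpleGraph V} {s : Set V}
    (h : (G.induce s).HasChordlessCycle) : G.HasChordlessCycle := by
  obtain ⟨n, f, hn, hinj, hadj⟩ := h
  exact ⟨n, fun i => (f i : V), hn, fun i j hij => hinj (Subtype.ext hij),
    fun i j => by rw [← hadj]; simp only [comap_adj, Function.Embedding.coe_subtype]⟩

theorem IsChordal.induce {G : SimpleGraph V} (h : G.IsChordal) (s : Set V) :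
    (G.induce s).IsChordal := by
  rw [isChordal_iff_not_hasChordlessCycle] at h ⊢
  exact fun hc => h hc.of_induce



variable {V : Type*}

/-- A walk from `x` to `y` given as a function, with interior vertices in `T`. -/
def FunWalk (G : SimpleGraph V) (x y : V) (T : Set V) (p : ℕ → V) (l : ℕ) : Prop :=
  p 0 = x ∧ p l = y ∧ (∀ i < l, G.Adj (p i) (p (i+1))) ∧ (∀ i, 0 < i → i < l → p i ∈ T)

theorem FunWalk.shortcut {G : SimpleGraph V} {x y : V} {T : Set V} {p : ℕ → V} {l : ℕ}
    (hw : G.FunWalk x y T p l) {i d : ℕ} (hd : 0 < d) (hidl : i + d + 1 ≤ l)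
    (hadj : G.Adj (p i) (p (i + d + 1))) :
    ∃ q, G.FunWalk x y T q (l - d) := by
  obtain ⟨h0, hl, hA, hT⟩ := hw
  refine ⟨fun k => if k ≤ i then p k else p (k + d), ?_, ?_, ?_, ?_⟩
  · simpa using h0
  · have h1 : ¬ (l - d ≤ i) := by omega
    simp only [h1, if_neg, if_false]
    have : l - d + d = l := by omega
    rw [this, hl]
  · intro k hk
    by_cases h1 : k + 1 ≤ i
    · simp only [if_pos h1, if_pos (by omega : k ≤ i)]
      exact hA k (by omega)
    · by_cases h2 : k ≤ i
      · have hki : k = i := by omega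
        simp only [if_pos h2, if_neg h1]
        subst hki
        have : k + 1 + d = k + d + 1 := by ring
        rw [this]
        exact hadj
      · simp only [if_neg h2, if_neg (by omega : ¬ (k + 1 ≤ i))]
        have : k + 1 + d = (k + d) + 1 := by ring
        rw [this]
        exact hA (k + d) (by omega)
  · intro k hk1 hk2
    by_cases h1 : k ≤ i
    · simp only [if_pos h1]
      exact hT k hk1 (by omega)
    · simp only [if_neg h1]
      exact hT (k + d) (by omega) (by omega)

theorem exists_min_funwalk {G : SimpleGraph V} {x y : V} {T : Set V}
    (hex : ∃ p l, G.FunWalk x y T p l) (hxy : x ≠ y) (hnadj : ¬ G.Adj x y) :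
    ∃ p l, G.FunWalk x y T p l ∧ 2 ≤ l ∧
      (∀ i j, i < j → j ≤ l → p i ≠ p j) ∧
      (∀ i j, i + 1 < j → j ≤ l → ¬ G.Adj (p i) (p j)) := by
  classical
  have hex' : ∃ l, ∃ p, G.FunWalk x y T p l := by
    obtain ⟨p, l, h⟩ := hex; exact ⟨l, p, h⟩
  set l := Nat.find hex' with hldef
  obtain ⟨p, hp⟩ := Nat.find_spec hex'
  rw [← hldef] at hp
  have hmin : ∀ l' < l, ¬ ∃ p, G.FunWalk x y T p l' := fun l' h => Nat.find_min hex' h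
  have hl0 : l ≠ 0 := by
    intro h
    apply hxy
    rw [← hp.1, ← hp.2.1, h]
  have hl1 : l ≠ 1 := by
    intro h
    apply hnadj
    have h2 := hp.2.2.1 0 (by omega)
    rw [hp.1] at h2
    have h3 : (0:ℕ) + 1 = l := by omega
    rw [h3, hp.2.1] at h2
    exact h2
  have hl2 : 2 ≤ l := by omega
  -- no chords
  have hchord : ∀ i j, i + 1 < j → j ≤ l → ¬ G.Adj (p i) (p j) := by
    intro i j hij hjl hadj
    have hd : 0 < j - i - 1 := by omega
    have : i + (j - i - 1) + 1 = j := by omega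
    obtain ⟨q, hq⟩ := hp.shortcut (i := i) (d := j - i - 1) hd (by omega) (by rw [this]; exact hadj)
    exact hmin (l - (j - i - 1)) (by omega) ⟨q, hq⟩
  -- no duplicates
  have hdup : ∀ i j, i < j → j ≤ l → p i ≠ p j := by
    intro i j hij hjl heq
    by_cases hjlt : j = l
    · -- truncate at i
      apply hmin i (by omega)
      exact ⟨p, hp.1, by rw [heq, hjlt, hp.2.1], fun k hk => hp.2.2.1 k (by omega),
        fun k hk1 hk2 => hp.2.2.2 k hk1 (by omega)⟩
    · have hd : 0 < j - i := by omega
      have hj1 : i + (j - i) + 1 = j + 1 := by omega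
      have hadj : G.Adj (p i) (p (i + (j - i) + 1)) := by
        rw [hj1, heq]
        exact hp.2.2.1 j (by omega)
      obtain ⟨q, hq⟩ := hp.shortcut (i := i) (d := j - i) hd (by omega) hadj
      exact hmin (l - (j - i)) (by omega) ⟨q, hq⟩
  exact ⟨p, l, hp, hl2, hdup, hchord⟩


theorem hasChordlessCycle_of_g {G : SimpleGraph V} {n : ℕ} (hn : 4 ≤ n) (g : ℕ → V)
    (hinj : ∀ i j, i < j → j < n → g i ≠ g j)
    (hadj : ∀ i j, i < j → j < n →
      (G.Adj (g i) (g j) ↔ (j = i + 1 ∨ (i = 0 ∧ j = n - 1)))) :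
    G.HasChordlessCycle := by
  obtain ⟨m, rfl⟩ : ∃ m, n = m + 2 := ⟨n - 2, by omega⟩
  have subhelp : ∀ I J : Fin (m + 2), (J - I = 1) ↔
      (J.val = I.val + 1 ∨ (I.val = m + 1 ∧ J.val = 0)) := by
    intro I J
    rw [sub_eq_iff_eq_add, Fin.ext_iff, Fin.add_def]
    simp only [Fin.val_mk, Fin.val_one]
    have hI := I.isLt
    have hJ := J.isLt
    rcases Nat.lt_or_ge (1 + I.val) (m + 2) with h | h
    · rw [Nat.mod_eq_of_lt h]; omega
    · have h2 : 1 + I.val = m + 2 := by omega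
      rw [h2, Nat.mod_self]; omega
  have key : ∀ I J : Fin (m + 2), I.val < J.val →
      (G.Adj (g I.val) (g J.val) ↔ (cycleGraph (m + 2)).Adj I J) := by
    intro I J hIJ
    rw [cycleGraph_adj, subhelp, subhelp, hadj _ _ hIJ J.isLt]
    have hJ := J.isLt
    omega
  refine ⟨m + 2, fun i => g i.val, hn, ?_, ?_⟩
  · intro I J h
    rcases lt_trichotomy I.val J.val with hc | hc | hc
    · exact absurd h (hinj _ _ hc J.isLt)
    · exact Fin.ext hc
    · exact absurd h.symm (hinj _ _ hc I.isLt)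
  · intro I J
    rcases lt_trichotomy I.val J.val with hc | hc | hc
    · exact key I J hc
    · have : I = J := Fin.ext hc
      subst this
      exact iff_of_false (G.irrefl) ((cycleGraph (m + 2)).irrefl)
    · rw [G.adj_comm, (cycleGraph (m + 2)).adj_comm]
      exact key J I hc

theorem hasChordlessCycle_of_two_paths {G : SimpleGraph V} {x y : V} {TA TB : Set V}
    {pA pB : ℕ → V} {lA lB : ℕ}
    (hxy : x ≠ y) (hnadj : ¬ G.Adj x y)
    (hA : G.FunWalk x y TA pA lA) (hA2 : 2 ≤ lA)
    (hAdup : ∀ i j, i < j → j ≤ lA → pA i ≠ pA j)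
    (hAch : ∀ i j, i + 1 < j → j ≤ lA → ¬ G.Adj (pA i) (pA j))
    (hB : G.FunWalk x y TB pB lB) (hB2 : 2 ≤ lB)
    (hBdup : ∀ i j, i < j → j ≤ lB → pB i ≠ pB j)
    (hBch : ∀ i j, i + 1 < j → j ≤ lB → ¬ G.Adj (pB i) (pB j))
    (hABne : ∀ u ∈ TA, ∀ w ∈ TB, u ≠ w)
    (hABnadj : ∀ u ∈ TA, ∀ w ∈ TB, ¬ G.Adj u w)
    (hxTB : x ∉ TB) (hyTB : y ∉ TB) :
    G.HasChordlessCycle := by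
  obtain ⟨hA0, hAl, hAadj, hAmem⟩ := hA
  obtain ⟨hB0, hBl, hBadj, hBmem⟩ := hB
  set n := lA + lB with hn
  set g : ℕ → V := fun k => if k ≤ lA then pA k else pB (n - k) with hg
  have hgA : ∀ k, k ≤ lA → g k = pA k := fun k hk => if_pos hk
  have hgB : ∀ k, lA < k → g k = pB (n - k) := fun k hk => if_neg (by omega)
  -- g j for lA < j < n is an interior vertex of pB
  have hBint : ∀ j, lA < j → j < n → pB (n - j) ∈ TB :=
    fun j h1 h2 => hBmem (n - j) (by omega) (by omega)
  -- classification of pA i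
  have hAloc : ∀ i, 0 < i → i < lA → pA i ∈ TA := fun i h1 h2 => hAmem i h1 h2
  -- cross inequality
  have hcross : ∀ i, i ≤ lA → ∀ j, lA < j → j < n → pA i ≠ pB (n - j) := by
    intro i hi j hj1 hj2
    have hmem : pB (n - j) ∈ TB := hBint j hj1 hj2
    rcases Nat.eq_zero_or_pos i with h0 | h0
    · subst h0
      rw [hA0]
      intro heq
      exact hxTB (heq ▸ hmem)
    · rcases Nat.eq_or_lt_of_le hi with hL | hL
      · rw [hL, hAl]
        intro heq
        exact hyTB (heq ▸ hmem)
      · exact hABne _ (hAloc i h0 hL) _ hmem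
  apply hasChordlessCycle_of_g (n := n) (by omega) g
  · -- injectivity
    intro i j hij hjn
    by_cases hj : j ≤ lA
    · rw [hgA i (by omega), hgA j hj]
      exact hAdup i j hij hj
    · push_neg at hj
      rw [hgB j hj]
      by_cases hi : i ≤ lA
      · rw [hgA i hi]
        exact hcross i hi j hj hjn
      · push_neg at hi
        rw [hgB i hi]
        exact fun heq => hBdup (n - j) (n - i) (by omega) (by omega) heq.symm
  · -- adjacency characterization
    intro i j hij hjn
    by_cases hj : j ≤ lA
    · rw [hgA i (by omega), hgA j hj]
      constructor
      · intro hadj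
        left
        by_contra h
        exact hAch i j (by omega) hj hadj
      · rintro (rfl | ⟨h0, h1⟩)
        · exact hAadj i (by omega)
        · omega
    · push_neg at hj
      rw [hgB j hj]
      by_cases hi : i ≤ lA
      · rw [hgA i hi]
        rcases Nat.eq_zero_or_pos i with h0 | h0
        · -- i = 0 : x = pB 0
          subst h0
          rw [hA0, ← hB0]
          constructor
          · intro hadj
            right
            refine ⟨rfl, ?_⟩
            by_contra h
            have hk : 0 + 1 < n - j := by omega
            exact hBch 0 (n - j) hk (by omega) hadj
          · rintro (h1 | ⟨-, h1⟩)
            · omega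
            · have : n - j = 1 := by omega
              rw [this]
              exact hBadj 0 (by omega)
        · rcases Nat.eq_or_lt_of_le hi with hL | hL
          · -- i = lA : y = pB lB
            rw [hL, hAl, ← hBl]
            constructor
            · intro hadj
              left
              by_contra h
              have hk : (n - j) + 1 < lB := by omega
              exact hBch (n - j) lB hk (le_refl lB) hadj.symm
            · rintro (h1 | ⟨h0, -⟩)
              · have h2 : n - j = lB - 1 := by omega
                rw [h2]
                have := hBadj (lB - 1) (by omega)
                have h3 : lB - 1 + 1 = lB := by omega
                rw [h3] at this
                exact this.symm
              · omega
          · -- interior of A vs interior of B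
            refine iff_of_false ?_ (by omega)
            exact hABnadj _ (hAloc i h0 hL) _ (hBint j hj hjn)
      · push_neg at hi
        rw [hgB i hi]
        constructor
        · intro hadj
          left
          by_contra h
          have hk : (n - j) + 1 < n - i := by omega
          exact hBch (n - j) (n - i) hk (by omega) hadj.symm
        · rintro (h1 | ⟨h0, -⟩)
          · have h2 : n - i = (n - j) + 1 := by omega
            rw [h2]
            exact (hBadj (n - j) (by omega)).symm
          · omega

theorem funwalk_nil {G : SimpleGraph V} (x : V) (T : Set V) :
    G.FunWalk x x T (fun _ => x) 0 :=
  ⟨rfl, rfl, fun i hi => absurd hi (by omega), fun i h1 h2 => absurd h2 (by omega)⟩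

theorem funwalk_single {G : SimpleGraph V} {x y : V} (h : G.Adj x y) (T : Set V) :
    G.FunWalk x y T (fun k => if k = 0 then x else y) 1 :=
  ⟨rfl, rfl, fun i hi => by
    have : i = 0 := by omega
    subst this
    simpa using h, fun i h1 h2 => by omega⟩

theorem FunWalk.mono {G : SimpleGraph V} {x y : V} {T T' : Set V} {p : ℕ → V} {l : ℕ}
    (h : G.FunWalk x y T p l) (hTT : T ⊆ T') : G.FunWalk x y T' p l :=
  ⟨h.1, h.2.1, h.2.2.1, fun i h1 h2 => hTT (h.2.2.2 i h1 h2)⟩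

theorem FunWalk.trunc {G : SimpleGraph V} {x y : V} {T : Set V} {p : ℕ → V} {l : ℕ}
    (h : G.FunWalk x y T p l) {i : ℕ} (hi : i ≤ l) : G.FunWalk x (p i) T p i :=
  ⟨h.1, rfl, fun k hk => h.2.2.1 k (by omega), fun k h1 h2 => h.2.2.2 k h1 (by omega)⟩

theorem FunWalk.reverse {G : SimpleGraph V} {x y : V} {T : Set V} {p : ℕ → V} {l : ℕ}
    (h : G.FunWalk x y T p l) : G.FunWalk y x T (fun k => p (l - k)) l := by
  obtain ⟨h0, hl, hadj, hmem⟩ := h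
  refine ⟨by simpa using hl, by simpa using h0, ?_, ?_⟩
  · intro i hi
    have h1 : l - (i + 1) + 1 = l - i := by omega
    have := (hadj (l - (i + 1)) (by omega)).symm
    rwa [h1] at this
  · intro i h1 h2
    exact hmem (l - i) (by omega) (by omega)

theorem FunWalk.append {G : SimpleGraph V} {x y z : V} {T : Set V} {p q : ℕ → V} {l l' : ℕ}
    (h1 : G.FunWalk x y T p l) (h2 : G.FunWalk y z T q l') (hy : y ∈ T) :
    G.FunWalk x z T (fun k => if k < l then p k else q (k - l)) (l + l') := by
  obtain ⟨hp0, hpl, hpadj, hpmem⟩ := h1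
  obtain ⟨hq0, hql, hqadj, hqmem⟩ := h2
  refine ⟨?_, ?_, ?_, ?_⟩
  · rcases Nat.eq_zero_or_pos l with h | h
    · simp only [h, Nat.lt_irrefl, if_neg, if_false, Nat.not_lt_zero]
      rw [Nat.sub_zero, hq0, ← hpl, h, hp0]
    · simpa [h] using hp0
  · have h3 : ¬ (l + l' < l) := by omega
    simp only [if_neg h3]
    rw [Nat.add_sub_cancel_left, hql]
  · intro k hk
    by_cases hk1 : k + 1 < l
    · simp only [if_pos (by omega : k < l), if_pos hk1]
      exact hpadj k (by omega)
    · by_cases hk2 : k < l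
      · -- k + 1 = l
        have hkl : k + 1 = l := by omega
        simp only [if_pos hk2, if_neg hk1]
        have : k + 1 - l = 0 := by omega
        rw [this, hq0, ← hpl, ← hkl]
        exact hpadj k (by omega)
      · simp only [if_neg hk2, if_neg (by omega : ¬ (k + 1 < l))]
        have h4 : k + 1 - l = (k - l) + 1 := by omega
        rw [h4]
        exact hqadj (k - l) (by omega)
  · intro k hpos hlt
    by_cases hk : k < l
    · simp only [if_pos hk]
      exact hpmem k hpos hk
    · simp only [if_neg hk]
      rcases Nat.eq_or_lt_of_le (Nat.le_of_not_lt hk) with h | h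
    
      · have : k - l = 0 := by omega
        rw [this, hq0]
        exact hy
      · exact hqmem (k - l) (by omega) (by omega)

/-- Vertices reachable from `c` while avoiding `S`. -/
def ReachSet (G : SimpleGraph V) (S : Set V) (c : V) : Set V :=
  {v | v ∉ S ∧ ∃ p l, G.FunWalk c v {u | u ∉ S} p l}

theorem mem_reachSet_self {G : SimpleGraph V} {S : Set V} {c : V} (hc : c ∉ S) :
    c ∈ G.ReachSet S c :=
  ⟨hc, _, 0, funwalk_nil c _⟩

theorem reachSet_closed {G : SimpleGraph V} {S : Set V} {c : V} {v z : V}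
    (hv : v ∈ G.ReachSet S c) (hadj : G.Adj v z) (hz : z ∉ S) : z ∈ G.ReachSet S c := by
  obtain ⟨hvS, p, l, hw⟩ := hv
  exact ⟨hz, _, l + 1, hw.append (funwalk_single hadj _) hvS⟩

theorem reachSet_strengthen {G : SimpleGraph V} {S : Set V} {c : V} {v : V} {p : ℕ → V} {l : ℕ}
    (hw : G.FunWalk c v {u | u ∉ S} p l) : G.FunWalk c v (G.ReachSet S c) p l := by
  refine ⟨hw.1, hw.2.1, hw.2.2.1, fun i h1 h2 => ?_⟩
  exact ⟨hw.2.2.2 i h1 h2, p, i, hw.trunc (by omega)⟩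

theorem reachSet_connect {G : SimpleGraph V} {S : Set V} {c : V} (hc : c ∉ S) {u w : V}
    (hu : u ∈ G.ReachSet S c) (hw : w ∈ G.ReachSet S c) :
    ∃ p l, G.FunWalk u w (G.ReachSet S c) p l := by
  obtain ⟨-, p, l, hp⟩ := hu
  obtain ⟨-, q, l', hq⟩ := hw
  exact ⟨_, _, (reachSet_strengthen hp).reverse.append (reachSet_strengthen hq)
    (mem_reachSet_self hc)⟩

theorem reachSet_joinwalk {G : SimpleGraph V} {S : Set V} {c d : V} {v : V}
    (hv1 : v ∈ G.ReachSet S c) (hv2 : v ∈ G.ReachSet S d) :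
    ∃ p l, G.FunWalk c d {u | u ∉ S} p l := by
  obtain ⟨hvS, p, l, hp⟩ := hv1
  obtain ⟨-, q, l', hq⟩ := hv2
  exact ⟨_, _, hp.append hq.reverse hvS⟩

theorem exit_lemma {G : SimpleGraph V} {S : Set V} {s : V} (hs : s ∈ S) {c d : V}
    (hc : c ∉ S) (hd' : d ∉ S) (hd : d ∉ G.ReachSet S c) {p : ℕ → V} {l : ℕ}
    (hw : G.FunWalk c d {u | u ∉ S \ {s}} p l) :
    ∃ u ∈ G.ReachSet S c, G.Adj u s := by
  have hex : ∃ k, p k ∉ G.ReachSet S c := ⟨l, by rw [hw.2.1]; exact hd⟩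
  set k := Nat.find hex with hk
  have hkspec : p k ∉ G.ReachSet S c := Nat.find_spec hex
  have hmin : ∀ j < k, p j ∈ G.ReachSet S c := by
    intro j hj
    by_contra h
    have h2 : Nat.find hex ≤ j := Nat.find_le h
    omega
  have hk0 : 0 < k := by
    rcases Nat.eq_zero_or_pos k with h | h
    · exfalso
      apply hkspec
      rw [h, hw.1]
      exact mem_reachSet_self hc
    · exact h
  have hkl : k ≤ l := Nat.find_le (by rw [hw.2.1]; exact hd)
  have hadj : G.Adj (p (k - 1)) (p k) := by
    have := hw.2.2.1 (k - 1) (by omega)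
    have h1 : k - 1 + 1 = k := by omega
    rwa [h1] at this
  have hprev : p (k - 1) ∈ G.ReachSet S c := hmin (k - 1) (by omega)
  have hknS : p k ∉ S \ {s} := by
    rcases Nat.eq_or_lt_of_le hkl with h | h
    · rw [h, hw.2.1]
      exact fun hmem => hd' hmem.1
    · exact hw.2.2.2 k hk0 h
  have hkS : p k ∈ S := by
    by_contra h
    exact hkspec (reachSet_closed hprev hadj h)
  have : p k = s := by
    by_contra h
    exact hknS ⟨hkS, h⟩
  exact ⟨p (k - 1), hprev, this ▸ hadj⟩

/-- A vertex is simplicial if its neighborhood is a clique. -/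
def IsSimplicial (G : SimpleGraph V) (v : V) : Prop := G.IsClique (G.neighborSet v)

end SimpleGraph

namespace SimpleGraph

universe u

theorem dirac_aux : ∀ (N : ℕ) (V : Type u) [Fintype V] (G : SimpleGraph V),
    Fintype.card V ≤ N → ¬ G.HasChordlessCycle →
    (∀ u w : V, u ≠ w → G.Adj u w) ∨
      ∃ v w : V, v ≠ w ∧ ¬ G.Adj v w ∧ G.IsSimplicial v ∧ G.IsSimplicial w := by
  intro N
  induction N with
  | zero =>
    intro V _ G hcard _
    left
    intro u w h
    have : Fintype.card V = 0 := by omega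
    exact ((Fintype.card_eq_zero_iff.mp this).elim u)
  | succ N IH =>
    intro V _ G hcard hch
    by_cases hcomp : ∀ u w : V, u ≠ w → G.Adj u w
    · exact Or.inl hcomp
    right
    push_neg at hcomp
    obtain ⟨a, b, hab, hnadj⟩ := hcomp
    -- separators
    set Sep : Finset V → Prop := fun S =>
      a ∉ (S : Set V) ∧ b ∉ (S : Set V) ∧
        ¬ ∃ p l, G.FunWalk a b {u | u ∉ (S : Set V)} p l with hSepDef
    have hSep0 : Sep (Finset.univ \ {a, b}) := by
      refine ⟨by simp, by simp, ?_⟩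
      rintro ⟨p, l, hw⟩
      have hl0 : l ≠ 0 := by
        intro h
        exact hab (by rw [← hw.1, ← hw.2.1, h])
      have hp1 : p 1 = a ∨ p 1 = b := by
        rcases Nat.eq_or_lt_of_le (by omega : 1 ≤ l) with h | h
        · right; rw [h, hw.2.1]
        · have := hw.2.2.2 1 (by omega) h
          simp only [Finset.coe_sdiff, Finset.coe_univ, Set.mem_setOf_eq, Set.mem_diff,
            Set.mem_univ, true_and, not_not, Finset.coe_insert, Finset.coe_singleton] at this
          simpa using this
      have hadj01 : G.Adj a (p 1) := by
        have := hw.2.2.1 0 (by omega)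
        rwa [hw.1] at this
      rcases hp1 with h | h
      · rw [h] at hadj01; exact G.irrefl hadj01
      · rw [h] at hadj01; exact hnadj hadj01
    have hexk : ∃ k, ∃ S : Finset V, S.card = k ∧ Sep S := ⟨_, _, rfl, hSep0⟩
    obtain ⟨S, hScard, hSsep⟩ := Nat.find_spec hexk
    have hSmin : ∀ S' : Finset V, Sep S' → S.card ≤ S'.card := by
      intro S' h
      rw [hScard]
      exact Nat.find_min' hexk ⟨S', rfl, h⟩
    obtain ⟨haS, hbS, hSnowalk⟩ := hSsep
    set A := G.ReachSet ↑S a with hA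
    set B := G.ReachSet ↑S b with hB
    have haA : a ∈ A := mem_reachSet_self haS
    have hbB : b ∈ B := mem_reachSet_self hbS
    have hABdisj : ∀ u, u ∈ A → u ∈ B → False := by
      intro u hu1 hu2
      exact hSnowalk (reachSet_joinwalk hu1 hu2)
    have hABnadj : ∀ u ∈ A, ∀ w ∈ B, ¬ G.Adj u w := by
      intro u hu w hw hadj
      exact hABdisj w (reachSet_closed hu hadj hw.1) hw
    have hbA : b ∉ A := fun h => hABdisj b h hbB
    have haB : a ∉ B := fun h => hABdisj a haA h
    -- neighbors of separator vertices
    have hNbr : ∀ s ∈ S, (∃ u ∈ A, G.Adj u s) ∧ (∃ u ∈ B, G.Adj u s) := by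
      intro s hs
      have hcard' : (S.erase s).card < S.card := Finset.card_erase_lt_of_mem hs
      have hnsep : ¬ Sep (S.erase s) := by
        intro h
        exact absurd (hSmin _ h) (by omega)
      have hwalk : ∃ p l, G.FunWalk a b {u | u ∉ (↑(S.erase s) : Set V)} p l := by
        by_contra h
        refine hnsep ⟨?_, ?_, h⟩
        · intro h'
          exact haS (Finset.mem_coe.mpr (Finset.erase_subset _ _ (Finset.mem_coe.mp h')))
        · intro h'
          exact hbS (Finset.mem_coe.mpr (Finset.erase_subset _ _ (Finset.mem_coe.mp h')))
      obtain ⟨p, l, hw⟩ := hwalk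
      have hcoe : (↑(S.erase s) : Set V) = (↑S : Set V) \ {s} := by
        simp [Finset.coe_erase]
      rw [hcoe] at hw
      constructor
      · exact exit_lemma (Finset.mem_coe.mpr hs) haS hbS hbA hw
      · exact exit_lemma (Finset.mem_coe.mpr hs) hbS haS haB hw.reverse
    -- S is a clique
    have hSclique : ∀ x ∈ S, ∀ y ∈ S, x ≠ y → G.Adj x y := by
      intro x hx y hy hxy
      by_contra hnxy
      obtain ⟨⟨ux, hux, huxx⟩, ⟨wx, hwx, hwxx⟩⟩ := hNbr x hx
      obtain ⟨⟨uy, huy, huyy⟩, ⟨wy, hwy, hwyy⟩⟩ := hNbr y hy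
      have hexA : ∃ p l, G.FunWalk x y A p l := by
        obtain ⟨q, l', hq⟩ := reachSet_connect haS hux huy
        exact ⟨_, _, ((funwalk_single huxx.symm A).append hq hux).append
          (funwalk_single huyy A) huy⟩
      have hexB : ∃ p l, G.FunWalk x y B p l := by
        obtain ⟨q, l', hq⟩ := reachSet_connect hbS hwx hwy
        exact ⟨_, _, ((funwalk_single hwxx.symm B).append hq hwx).append
          (funwalk_single hwyy B) hwy⟩
      obtain ⟨pA, lA, hwA, hA2, hAdup, hAch⟩ := exists_min_funwalk hexA hxy hnxy
      obtain ⟨pB, lB, hwB, hB2, hBdup, hBch⟩ := exists_min_funwalk hexB hxy hnxy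
      exact hch (hasChordlessCycle_of_two_paths hxy hnxy hwA hA2 hAdup hAch hwB hB2 hBdup hBch
        (fun u hu w hw => fun h => hABdisj u hu (h ▸ hw))
        (fun u hu w hw => hABnadj u hu w hw)
        (fun h => h.1 (Finset.mem_coe.mpr hx)) (fun h => h.1 (Finset.mem_coe.mpr hy)))
    -- find a simplicial vertex on each side
    have hside : ∀ (c z : V), c ∉ (S : Set V) → z ∉ G.ReachSet ↑S c → z ∉ (S : Set V) →
        ∃ v ∈ G.ReachSet ↑S c, G.IsSimplicial v := by
      intro c z hcS hzC hzS
      set C := G.ReachSet ↑S c with hC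
      set t : Set V := C ∪ ↑S with ht
      have hcC : c ∈ C := mem_reachSet_self hcS
      have hzt : z ∉ t := by
        rw [ht]
        rintro (h | h)
        exacts [hzC h, hzS h]
      have hcard₁ : Fintype.card ↥t ≤ N := by
        have h2 : Fintype.card ↥t < Fintype.card V := by
          exact Fintype.card_lt_of_injective_of_notMem (Subtype.val : ↥t → V)
            Subtype.val_injective (b := z) (by
              rintro ⟨⟨u, hu⟩, rfl⟩
              exact hzt hu)
        omega
      have hch₁ : ¬ (G.induce t).HasChordlessCycle := fun h => hch h.of_induce
      -- closure of neighborhoods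
      have hclosure : ∀ u, u ∈ C → ∀ w, G.Adj u w → w ∈ t := by
        intro u hu w hadj
        by_cases hw : w ∈ (S : Set V)
        · exact Or.inr hw
        · exact Or.inl (reachSet_closed hu hadj hw)
      -- transfer of simpliciality
      have htransfer : ∀ u : ↥t, (u : V) ∈ C → (G.induce t).IsSimplicial u →
          G.IsSimplicial (u : V) := by
        intro u hu hsimp z1 hz1 z2 hz2 hne
        have hz1t : z1 ∈ t := hclosure _ hu _ hz1
        have hz2t : z2 ∈ t := hclosure _ hu _ hz2
        have h1 : (⟨z1, hz1t⟩ : ↥t) ∈ (G.induce t).neighborSet u := by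
          simpa using hz1
        have h2 : (⟨z2, hz2t⟩ : ↥t) ∈ (G.induce t).neighborSet u := by
          simpa using hz2
        have := hsimp h1 h2 (by simpa [Subtype.ext_iff] using hne)
        simpa using this
      rcases IH ↥t (G.induce t) hcard₁ hch₁ with hcomp₁ | ⟨v, w, hvw, hnvw, hsv, hsw⟩
      · refine ⟨c, hcC, ?_⟩
        intro z1 hz1 z2 hz2 hne
        have hz1t : z1 ∈ t := hclosure _ hcC _ hz1
        have hz2t : z2 ∈ t := hclosure _ hcC _ hz2
        have := hcomp₁ ⟨z1, hz1t⟩ ⟨z2, hz2t⟩ (by simpa [Subtype.ext_iff] using hne)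
        simpa using this
      · -- at least one of v, w lies in C
        have hone : ((v : V) ∈ C ∧ (G.induce t).IsSimplicial v) ∨
            ((w : V) ∈ C ∧ (G.induce t).IsSimplicial w) := by
          by_contra hcon
          have hv' : (v : V) ∈ (S : Set V) := by
            rcases v.2 with h1 | h1
            · exact absurd (Or.inl ⟨h1, hsv⟩) hcon
            · exact h1
          have hw' : (w : V) ∈ (S : Set V) := by
            rcases w.2 with h1 | h1
            · exact absurd (Or.inr ⟨h1, hsw⟩) hcon
            · exact h1
          have : G.Adj (v : V) (w : V) := hSclique _ (Finset.mem_coe.mp hv') _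
            (Finset.mem_coe.mp hw') (fun h' => hvw (Subtype.ext h'))
          exact hnvw (by simpa using this)
        rcases hone with ⟨h1, h2⟩ | ⟨h1, h2⟩
        · exact ⟨(v : V), h1, htransfer v h1 h2⟩
        · exact ⟨(w : V), h1, htransfer w h1 h2⟩
    obtain ⟨v, hvA, hvs⟩ := hside a b haS hbA hbS
    obtain ⟨w, hwB, hws⟩ := hside b a hbS haB haS
    exact ⟨v, w, fun h => hABdisj v hvA (h ▸ hwB), hABnadj v hvA w hwB, hvs, hws⟩

theorem exists_simplicial {V : Type u} [Fintype V] [Nonempty V] {G : SimpleGraph V}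
    (hch : ¬ G.HasChordlessCycle) : ∃ v, G.IsSimplicial v := by
  rcases dirac_aux (Fintype.card V) V G le_rfl hch with hcomp | ⟨v, -, -, -, hv, -⟩
  · refine ⟨Classical.arbitrary V, ?_⟩
    intro z1 hz1 z2 hz2 hne
    exact hcomp z1 z2 hne
  · exact ⟨v, hv⟩


section Components

universe v

variable {X : Type v} {G : SimpleGraph X} {w : X}

theorem reach_transfer (hv : G.IsSimplicial w) :
    ∀ (n : ℕ) (x y : X) (hx : x ≠ w) (hy : y ≠ w) (p : G.Walk x y), p.length ≤ n →
      (G.induce {u | u ≠ w}).Reachable ⟨x, hx⟩ ⟨y, hy⟩ := by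
  intro n
  induction n with
  | zero =>
    intro x y hx hy p hp
    have hxy : x = y := p.eq_of_length_eq_zero (by omega)
    subst hxy
    exact Reachable.refl _
  | succ n IHn =>
    intro x y hx hy p hp
    cases p with
    | nil => exact Reachable.refl _
    | @cons _ z _ h q =>
      by_cases hz : z = w
      · subst hz
        cases q with
        | nil => exact absurd rfl hy
        | @cons _ z2 _ h2 q2 =>
          have hz2 : z2 ≠ z := fun hh => G.irrefl (hh ▸ h2)
          have hxN : x ∈ G.neighborSet z := h.symm
          have hz2N : z2 ∈ G.neighborSet z := h2
          have hlen : q2.length ≤ n := by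
            simp only [Walk.length_cons] at hp
            omega
          by_cases hxz : x = z2
          · subst hxz
            exact IHn x y hx hy q2 hlen
          · have hadj : G.Adj x z2 := hv hxN hz2N hxz
            have hadj' : (G.induce {u | u ≠ z}).Adj ⟨x, hx⟩ ⟨z2, hz2⟩ := by simpa using hadj
            exact hadj'.reachable.trans (IHn z2 y hz2 hy q2 hlen)
      · have hadj' : (G.induce {u | u ≠ w}).Adj ⟨x, hx⟩ ⟨z, hz⟩ := by simpa using h
        have hlen : q.length ≤ n := by
          simp only [Walk.length_cons] at hp
          omega
        exact hadj'.reachable.trans (IHn z y hz hy q hlen)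

theorem comp_map_injective (hv : G.IsSimplicial w) :
    Function.Injective (fun c : (G.induce {u | u ≠ w}).ConnectedComponent =>
      c.map (Embedding.induce (G := G) {u | u ≠ w}).toHom) := by
  intro c d
  refine ConnectedComponent.ind₂ (fun x y h => ?_) c d
  simp only [ConnectedComponent.map_mk] at h
  have hr : G.Reachable (x : X) (y : X) := ConnectedComponent.eq.mp h
  obtain ⟨p⟩ := hr
  exact ConnectedComponent.eq.mpr (reach_transfer hv p.length _ _ x.2 y.2 p le_rfl)

theorem comp_card_le [Finite X] (hv : G.IsSimplicial w) :
    Nat.card (G.induce {u | u ≠ w}).ConnectedComponent ≤ Nat.card G.ConnectedComponent :=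
  Nat.card_le_card_of_injective _ (comp_map_injective hv)

theorem comp_card_succ_le [Finite X] (hv : G.IsSimplicial w) (hv0 : ∀ u, ¬ G.Adj w u) :
    Nat.card (G.induce {u | u ≠ w}).ConnectedComponent + 1 ≤ Nat.card G.ConnectedComponent := by
  have hnot : ∀ c : (G.induce {u | u ≠ w}).ConnectedComponent,
      c.map (Embedding.induce (G := G) {u | u ≠ w}).toHom ≠ G.connectedComponentMk w := by
    intro c
    refine ConnectedComponent.ind (fun x => fun h => ?_) c
    simp only [ConnectedComponent.map_mk] at h
    have hr : G.Reachable (x : X) w := ConnectedComponent.eq.mp h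
    obtain ⟨p⟩ := hr
    have hnn : ¬ p.reverse.Nil := Walk.not_nil_of_ne (fun hh => x.2 hh.symm)
    exact hv0 _ (Walk.adj_snd hnn)
  have hinj : Function.Injective
      (Sum.elim (fun c : (G.induce {u | u ≠ w}).ConnectedComponent =>
        c.map (Embedding.induce (G := G) {u | u ≠ w}).toHom)
        (fun _ : Unit => G.connectedComponentMk w)) := by
    rintro (c | c) (d | d) h
    · rw [comp_map_injective hv h]
    · exact absurd h (hnot c)
    · exact absurd h.symm (hnot d)
    · rfl
  have hle := Nat.card_le_card_of_injective _ hinj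
  rwa [Nat.card_sum, Nat.card_eq_fintype_card (α := Unit), Fintype.card_unit] at hle

end Components

section Counting

theorem alt_sum_choose (n : ℕ) : ∀ m : ℕ,
    ∑ k ∈ Finset.range (m + 1), (-1 : ℤ) ^ k * ((n + 1).choose k) = (-1) ^ m * (n.choose m) := by
  intro m
  induction m with
  | zero => simp
  | succ m IH =>
    rw [Finset.sum_range_succ, IH, Nat.choose_succ_succ (n := n) (k := m)]
    push_cast
    ring

theorem powerset_sum {X : Type v} [DecidableEq X] (s : Finset X) (m : ℕ) :
    ∑ T ∈ s.powerset.filter (fun T => T.card ≤ m), (-1 : ℤ) ^ T.card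
      = ∑ k ∈ Finset.range (m + 1), (-1 : ℤ) ^ k * (s.card.choose k) := by
  have hsplit : s.powerset.filter (fun T => T.card ≤ m)
      = (Finset.range (m + 1)).biUnion (fun k => Finset.powersetCard k s) := by
    ext T
    simp only [Finset.mem_filter, Finset.mem_powerset, Finset.mem_biUnion, Finset.mem_range,
      Finset.mem_powersetCard, Nat.lt_succ_iff]
    constructor
    · rintro ⟨h1, h2⟩
      exact ⟨T.card, h2, h1, rfl⟩
    · rintro ⟨k, hk, h1, rfl⟩
      exact ⟨h1, hk⟩
  rw [hsplit, Finset.sum_biUnion]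
  · apply Finset.sum_congr rfl
    intro k _
    have hconst : ∀ T ∈ Finset.powersetCard k s, (-1 : ℤ) ^ T.card = (-1) ^ k := by
      intro T hT
      rw [(Finset.mem_powersetCard.mp hT).2]
    rw [Finset.sum_congr rfl hconst, Finset.sum_const, Finset.card_powersetCard,
      nsmul_eq_mul, mul_comm]
  · intro a _ b _ hab
    exact s.pairwise_disjoint_powersetCard hab

theorem sum_le_card_components_of_isEmpty {X : Type v} [Fintype X] [IsEmpty X]
    (G : SimpleGraph X) (r : ℕ) :
    ∑ I ∈ G.cliqueComplex.filter (fun I => I.card ≤ 2 * r), (-1 : ℤ) ^ (I.card - 1) ≤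
      Nat.card G.ConnectedComponent := by
  have hempty : G.cliqueComplex = ∅ := by
    ext I
    simp only [cliqueComplex, Finset.mem_filter, Finset.mem_powerset, Finset.notMem_empty,
      iff_false]
    rintro ⟨-, ⟨x, -⟩, -⟩
    exact IsEmpty.false x
  rw [hempty, Finset.filter_empty, Finset.sum_empty]
  exact Int.natCast_nonneg _

theorem main_aux : ∀ (N : ℕ) (X : Type v) [Fintype X] (G : SimpleGraph X),
    Fintype.card X ≤ N → ¬ G.HasChordlessCycle → ∀ r : ℕ, 0 < r →
    ∑ I ∈ G.cliqueComplex.filter (fun I => I.card ≤ 2 * r), (-1 : ℤ) ^ (I.card - 1) ≤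
      Nat.card G.ConnectedComponent := by
  intro N
  induction N with
  | zero =>
    intro X _ G hcard _ r _
    have : IsEmpty X := Fintype.card_eq_zero_iff.mp (by omega)
    exact sum_le_card_components_of_isEmpty G r
  | succ N IH =>
    intro X _ G hcard hch r hr
    rcases isEmpty_or_nonempty X with hEmp | hNe
    · exact sum_le_card_components_of_isEmpty G r
    obtain ⟨v, hv⟩ := exists_simplicial hch
    set s : Set X := {u | u ≠ v} with hs
    have hcard' : Fintype.card ↥s ≤ N := by
      have h2 : Fintype.card ↥s < Fintype.card X := by
        exact Fintype.card_lt_of_injective_of_notMem (Subtype.val : ↥s → X)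
          Subtype.val_injective (b := v) (by rintro ⟨⟨u, hu⟩, huv⟩; exact hu huv)
      omega
    have hsum' := IH ↥s (G.induce s) hcard' (fun h => hch h.of_induce) r hr
    set C := G.cliqueComplex.filter (fun I => I.card ≤ 2 * r) with hC
    set C' := (G.induce s).cliqueComplex.filter (fun I => I.card ≤ 2 * r) with hC'
    set D := (G.neighborFinset v).powerset.filter (fun T => T.card ≤ 2 * r - 1) with hD
    -- part 1 : cliques not containing v
    have hpart1 : C.filter (fun I => v ∉ I)
        = C'.image (fun J => J.map (Function.Embedding.subtype _)) := by
      ext J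
      simp only [Finset.mem_filter, Finset.mem_image, hC, hC', cliqueComplex,
        Finset.mem_powerset]
      constructor
      · rintro ⟨⟨⟨-, hne, hcl⟩, hcd⟩, hvJ⟩
        have hJs : ∀ x ∈ J, x ∈ s := fun x hx => show x ≠ v from fun hxv => hvJ (hxv ▸ hx)
        refine ⟨J.subtype (· ∈ s), ⟨⟨Finset.subset_univ _, ?_, ?_⟩, ?_⟩, ?_⟩
        · rw [← Finset.card_pos, Finset.card_subtype, Finset.filter_true_of_mem hJs,
            Finset.card_pos]
          exact hne
        · intro a ha b hb hab
          have ha' : (a : X) ∈ J := by simpa using Finset.mem_coe.mp ha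
          have hb' : (b : X) ∈ J := by simpa using Finset.mem_coe.mp hb
          have := hcl ha' hb' (fun h => hab (Subtype.ext h))
          simpa using this
        · rw [Finset.card_subtype, Finset.filter_true_of_mem hJs]
          exact hcd
        · rw [Finset.subtype_map, Finset.filter_true_of_mem hJs]
      · rintro ⟨J', ⟨⟨-, hne, hcl⟩, hcd⟩, rfl⟩
        refine ⟨⟨⟨Finset.subset_univ _, ?_, ?_⟩, ?_⟩, ?_⟩
        · obtain ⟨x, hx⟩ := hne
          exact ⟨(x : X), Finset.mem_map_of_mem _ hx⟩
        · intro a ha b hb hab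
          obtain ⟨a', ha', rfl⟩ := Finset.mem_map.mp (Finset.mem_coe.mp ha)
          obtain ⟨b', hb', rfl⟩ := Finset.mem_map.mp (Finset.mem_coe.mp hb)
          have := hcl (Finset.mem_coe.mpr ha') (Finset.mem_coe.mpr hb')
            (fun h => hab (by rw [h]))
          simpa using this
        · rwa [Finset.card_map]
        · intro hmem
          obtain ⟨x, -, hx⟩ := Finset.mem_map.mp hmem
          exact x.2 hx
    have hsum1 : ∑ I ∈ C.filter (fun I => v ∉ I), (-1 : ℤ) ^ (I.card - 1)
        = ∑ I ∈ C', (-1 : ℤ) ^ (I.card - 1) := by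
      rw [hpart1, Finset.sum_image (fun a _ b _ h =>
        Finset.map_injective (Function.Embedding.subtype _) h)]
      apply Finset.sum_congr rfl
      intro J _
      rw [Finset.card_map]
    -- part 2 : cliques containing v
    have hpart2 : C.filter (fun I => v ∈ I) = D.image (insert v) := by
      ext J
      simp only [Finset.mem_filter, Finset.mem_image, hC, hD, cliqueComplex,
        Finset.mem_powerset]
      constructor
      · rintro ⟨⟨⟨-, -, hcl⟩, hcd⟩, hvJ⟩
        refine ⟨J.erase v, ⟨?_, ?_⟩, Finset.insert_erase hvJ⟩
        · intro u hu
          obtain ⟨hne, huJ⟩ := Finset.mem_erase.mp hu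
          exact (SimpleGraph.mem_neighborFinset _ _ _).mpr
            (hcl (Finset.mem_coe.mpr hvJ) (Finset.mem_coe.mpr huJ) (Ne.symm hne))
        · have h1 : 0 < J.card := Finset.card_pos.mpr ⟨v, hvJ⟩
          rw [Finset.card_erase_of_mem hvJ]
          omega
      · rintro ⟨T, ⟨hTN, hTc⟩, rfl⟩
        have hvT : v ∉ T := fun h =>
          (G.notMem_neighborFinset_self v) (hTN h)
        refine ⟨⟨⟨Finset.subset_univ _, ⟨v, Finset.mem_insert_self _ _⟩, ?_⟩, ?_⟩,
          Finset.mem_insert_self _ _⟩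
        · intro a ha b hb hab
          rw [Finset.coe_insert, Set.mem_insert_iff] at ha hb
          rcases ha with rfl | ha
          · rcases hb with rfl | hb
            · exact absurd rfl hab
            · exact (G.mem_neighborFinset _ _).mp (hTN (Finset.mem_coe.mp hb))
          · rcases hb with rfl | hb
            · exact ((G.mem_neighborFinset _ _).mp (hTN (Finset.mem_coe.mp ha))).symm
            · exact hv ((G.mem_neighborFinset _ _).mp (hTN (Finset.mem_coe.mp ha)))
                ((G.mem_neighborFinset _ _).mp (hTN (Finset.mem_coe.mp hb))) hab
        · rw [Finset.card_insert_of_notMem hvT]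
          omega
    have hsum2 : ∑ I ∈ C.filter (fun I => v ∈ I), (-1 : ℤ) ^ (I.card - 1)
        = ∑ k ∈ Finset.range (2 * r - 1 + 1), (-1 : ℤ) ^ k * ((G.neighborFinset v).card.choose k) := by
      rw [hpart2, Finset.sum_image ?hinj]
      case hinj =>
        intro a ha b hb hab
        have hva : v ∉ a := fun h =>
          (G.notMem_neighborFinset_self v) ((Finset.mem_powerset.mp (Finset.mem_filter.mp ha).1) h)
        have hvb : v ∉ b := fun h =>
          (G.notMem_neighborFinset_self v) ((Finset.mem_powerset.mp (Finset.mem_filter.mp hb).1) h)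
        rw [← Finset.erase_insert hva, ← Finset.erase_insert hvb, hab]
      rw [← powerset_sum]
      apply Finset.sum_congr rfl
      intro T hT
      have hvT : v ∉ T := fun h =>
        (G.notMem_neighborFinset_self v) ((Finset.mem_powerset.mp (Finset.mem_filter.mp hT).1) h)
      rw [Finset.card_insert_of_notMem hvT]
      simp
    -- assemble
    rw [← Finset.sum_filter_add_sum_filter_not C (fun I => v ∈ I), hsum1, hsum2]
    rcases Nat.eq_zero_or_pos (G.neighborFinset v).card with hd | hd
    · -- v is isolated
      have hv0 : ∀ u, ¬ G.Adj v u := by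
        intro u hadj
        have : u ∈ G.neighborFinset v := (G.mem_neighborFinset _ _).mpr hadj
        rw [Finset.card_eq_zero.mp hd] at this
        exact Finset.notMem_empty u this
      have hcomp := comp_card_succ_le hv hv0
      have hsval : ∑ k ∈ Finset.range (2 * r - 1 + 1),
          (-1 : ℤ) ^ k * ((G.neighborFinset v).card.choose k) = 1 := by
        rw [hd]
        rw [Finset.sum_eq_single_of_mem 0 (Finset.mem_range.mpr (by omega))]
        · simp
        · intro k _ hk
          obtain ⟨k', rfl⟩ : ∃ k', k = k' + 1 := ⟨k - 1, by omega⟩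
          simp [Nat.choose_zero_succ]
      rw [hsval]
      have hle2 : (Nat.card (G.induce s).ConnectedComponent : ℤ) + 1
          ≤ (Nat.card G.ConnectedComponent : ℤ) := by
        exact_mod_cast hcomp
      omega
    · -- v has a neighbor
      have hsval : ∑ k ∈ Finset.range (2 * r - 1 + 1),
          (-1 : ℤ) ^ k * ((G.neighborFinset v).card.choose k) ≤ 0 := by
        obtain ⟨d', hd'⟩ : ∃ d', (G.neighborFinset v).card = d' + 1 :=
          ⟨(G.neighborFinset v).card - 1, by omega⟩
        rw [hd', alt_sum_choose d' (2 * r - 1)]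
        have hodd : Odd (2 * r - 1) := ⟨r - 1, by omega⟩
        rw [hodd.neg_one_pow]
        have : (0 : ℤ) ≤ (d'.choose (2 * r - 1) : ℤ) := Int.natCast_nonneg _
        linarith
      have hcomp := comp_card_le hv
      have hle2 : (Nat.card (G.induce s).ConnectedComponent : ℤ)
          ≤ (Nat.card G.ConnectedComponent : ℤ) := by
        exact_mod_cast hcomp
      linarith

end Counting

end SimpleGraph

theorem truncated_alternating_sum_le_card_components {V : Type*} [Fintype V]
    (G : SimpleGraph V) (hG : G.IsChordal) (r : ℕ) (hr : 0 < r) :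
    ∑ I ∈ G.cliqueComplex.filter (fun I => I.card ≤ 2 * r), (-1 : ℤ) ^ (I.card - 1) ≤
      Nat.card G.ConnectedComponent := by
  have hch := (SimpleGraph.isChordal_iff_not_hasChordlessCycle G).mp hG
  exact SimpleGraph.main_aux (Fintype.card V) V G le_rfl hch r hr
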